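/- Null-at-the-boundary property of extremal depth: Assume: (i) every marginal CDF F_t is continuous on ℝ; (ii) for each c > 0 the set A_c := {x ∈ C(I,ℝ) : D_x(t) > c for all t ∈ I} is P-measurable, and P(A_c) → 1 as c → 0⁺. Let U ⊆ I be a nonempty open subinterval, let (α_n) be a strictly decreasing sequence in (0, 1/2) with α_n → 0, and let f_n : I → ℝ be Borel measurable functions such that for every n, either f_n(t) ≤ q_{α_n}(t) for all t ∈ U, or f_n(t) ≥ q_{1−α_n}(t) for all t ∈ U. Then ED(f_n,P) → 0 as n → ∞. -/

import Mathlib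

open MeasureTheory Set Filter
open scoped NNReal ENNReal symmDiff

noncomputable section

/-- The space `C(I, ℝ)` of continuous real-valued functions on `I = [0,1]`,
equipped with the sup metric. -/
abbrev FSp := C(unitInterval, ℝ)

/-- Borel σ-algebra on `C(I, ℝ)`. -/
instance : MeasurableSpace FSp := borel FSp
instance : BorelSpace FSp := ⟨rfl⟩

/-- Pointwise depth `D_g(t) = 1 - |P{x : x(t) > g(t)} - P{x : x(t) < g(t)}|`. -/
def pdepth (P : Measure FSp) (g : unitInterval → ℝ) (t : unitInterval) : ℝ :=
  1 - |(P {x : FSp | g t < x t}).toReal - (P {x : FSp | x t < g t}).toReal|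

/-- Depth CDF (d-CDF) `Φ_g(r) = Leb{t ∈ I : D_g(t) ≤ r}`. -/
def dcdf (P : Measure FSp) (g : unitInterval → ℝ) (r : ℝ) : ℝ :=
  (volume {t : unitInterval | pdepth P g t ≤ r}).toReal

/-- The set `R(g,h) = {r ∈ [0,1] : Φ_g(r) ≠ Φ_h(r)}`. -/
def Rset (P : Measure FSp) (g h : unitInterval → ℝ) : Set ℝ :=
  {r ∈ Icc (0:ℝ) 1 | dcdf P g r ≠ dcdf P h r}

/-- `g ≺ h`: `g` is more extreme than `h`, i.e. `R(g,h)` is nonempty and, with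
`r* = inf R(g,h)`, there is `δ > 0` with `Φ_g(r) > Φ_h(r)` for all
`r ∈ (r*, r*+δ) ∩ [0,1]`.  `g ⪰ h` is `¬ prec P g h`. -/
def prec (P : Measure FSp) (g h : unitInterval → ℝ) : Prop :=
  (Rset P g h).Nonempty ∧
  ∃ δ > 0, ∀ r ∈ Ioo (sInf (Rset P g h)) (sInf (Rset P g h) + δ) ∩ Icc (0:ℝ) 1,
    dcdf P h r < dcdf P g r

/-- Extremal depth `ED(g,P) = P*{x ∈ C(I,ℝ) : g ⪰ x}` (a measure applied to an
arbitrary set is the induced outer measure). -/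
def ed (P : Measure FSp) (g : unitInterval → ℝ) : ℝ :=
  (P {x : FSp | ¬ prec P g ⇑x}).toReal

/-- Minimal depth level `d_f = inf{r ∈ [0,1] : Φ_f(r) > 0}`. -/
def dmin (P : Measure FSp) (f : unitInterval → ℝ) : ℝ :=
  sInf {r ∈ Icc (0:ℝ) 1 | 0 < dcdf P f r}

/-- Marginal CDF `F_t(y) = P{x : x(t) ≤ y}`. -/
def margF (P : Measure FSp) (t : unitInterval) (y : ℝ) : ℝ :=
  (P {x : FSp | x t ≤ y}).toReal

/-- Pointwise quantile function `q_a(t) = inf{y : F_t(y) ≥ a}`. -/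
def quant (P : Measure FSp) (a : ℝ) (t : unitInterval) : ℝ :=
  sInf {y : ℝ | a ≤ margF P t y}

/-- Lower envelope `f_L(t) = inf{f(t) : f ∈ C(I,ℝ), ED(f,P) > α}`. -/
def envL (P : Measure FSp) (α : ℝ) (t : unitInterval) : ℝ :=
  sInf ((fun f : FSp => f t) '' {f : FSp | α < ed P ⇑f})

/-- Upper envelope `f_U(t) = sup{f(t) : f ∈ C(I,ℝ), ED(f,P) > α}`. -/
def envU (P : Measure FSp) (α : ℝ) (t : unitInterval) : ℝ :=
  sSup ((fun f : FSp => f t) '' {f : FSp | α < ed P ⇑f})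

/-- The `(1-α)` extremal-depth central region `C_{1-α}`. -/
def centralRegion (P : Measure FSp) (α : ℝ) : Set FSp :=
  {x : FSp | ∀ t, envL P α t ≤ x t ∧ x t ≤ envU P α t}

/-- Boundary `∂C_{1-α}` of the central region. -/
def centralBoundary (P : Measure FSp) (α : ℝ) : Set FSp :=
  {x ∈ centralRegion P α | ∃ t, x t = envL P α t ∨ x t = envU P α t}

section AuxLemmas

variable (P : Measure FSp) [IsProbabilityMeasure P]

private lemma meas_eval (t : unitInterval) : Measurable fun x : FSp => x t :=
  (continuous_eval_const t).measurable

private lemma margF_mono (t : unitInterval) : Monotone (margF P t) := fun y z hyz =>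
  ENNReal.toReal_mono (measure_ne_top P _)
    (measure_mono fun x hx => le_trans hx hyz)

private lemma prob_gt (t : unitInterval) (y : ℝ) :
    (P {x : FSp | y < x t}).toReal = 1 - margF P t y := by
  have hm : MeasurableSet {x : FSp | x t ≤ y} := (meas_eval t) measurableSet_Iic
  have hset : {x : FSp | y < x t} = {x : FSp | x t ≤ y}ᶜ := by
    ext x; simp [not_le]
  rw [hset, measure_compl hm (measure_ne_top P _), measure_univ,
    ENNReal.toReal_sub_of_le prob_le_one ENNReal.one_ne_top, ENNReal.toReal_one]
  rfl

private lemma prob_lt (t : unitInterval) (hF : Continuous (margF P t)) (y : ℝ) :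
    (P {x : FSp | x t < y}).toReal = margF P t y := by
  have hmono : Monotone fun n : ℕ => {x : FSp | x t ≤ y - 1 / (n + 1)} := by
    intro m n hmn x hx
    simp only [mem_setOf_eq] at hx ⊢
    have h1 : (1 : ℝ) / (n + 1) ≤ 1 / (m + 1) := by
      apply one_div_le_one_div_of_le (by positivity)
      exact_mod_cast add_le_add (Nat.cast_le.2 hmn) (le_refl (1:ℝ))
    linarith
  have hU : (⋃ n : ℕ, {x : FSp | x t ≤ y - 1 / (n + 1)}) = {x : FSp | x t < y} := by
    ext x
    simp only [mem_iUnion, mem_setOf_eq]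
    constructor
    · rintro ⟨n, hn⟩
      have : (0 : ℝ) < 1 / (n + 1) := by positivity
      linarith
    · intro hx
      obtain ⟨n, hn⟩ := exists_nat_one_div_lt (show (0:ℝ) < y - x t by linarith)
      exact ⟨n, by linarith⟩
  have h1 : Tendsto (fun n : ℕ => P {x : FSp | x t ≤ y - 1 / (n + 1)}) atTop
      (nhds (P {x : FSp | x t < y})) := by
    have := tendsto_measure_iUnion_atTop (μ := P) hmono
    rwa [hU] at this
  have h2 : Tendsto (fun n : ℕ => margF P t (y - 1 / (n + 1))) atTop
      (nhds ((P {x : FSp | x t < y}).toReal)) :=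
    (ENNReal.tendsto_toReal (measure_ne_top P _)).comp h1
  have h3 : Tendsto (fun n : ℕ => margF P t (y - 1 / (n + 1))) atTop
      (nhds (margF P t y)) := by
    apply (hF.tendsto y).comp
    have : Tendsto (fun n : ℕ => y - 1 / (n + 1 : ℝ)) atTop (nhds (y - 0)) :=
      tendsto_const_nhds.sub tendsto_one_div_add_atTop_nhds_zero_nat
    simpa using this
  exact tendsto_nhds_unique h2 h3

private lemma margF_exists_hi (t : unitInterval) {α : ℝ} (hα : α < 1) :
    ∃ y : ℝ, α ≤ margF P t y := by
  have hmono : Monotone fun n : ℕ => {x : FSp | x t ≤ (n : ℝ)} := by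
    intro m n hmn x hx
    simp only [mem_setOf_eq] at hx ⊢
    exact le_trans hx (by exact_mod_cast hmn)
  have hU : (⋃ n : ℕ, {x : FSp | x t ≤ (n : ℝ)}) = univ := by
    ext x
    simp only [mem_iUnion, mem_setOf_eq, mem_univ, iff_true]
    exact exists_nat_ge (x t)
  have h1 : Tendsto (fun n : ℕ => P {x : FSp | x t ≤ (n : ℝ)}) atTop (nhds 1) := by
    have := tendsto_measure_iUnion_atTop (μ := P) hmono
    rwa [hU, measure_univ] at this
  have h2 : Tendsto (fun n : ℕ => margF P t n) atTop (nhds 1) := by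
    have := (ENNReal.tendsto_toReal ENNReal.one_ne_top).comp h1
    simpa [Function.comp_def, margF, ENNReal.toReal_one] using this
  have := (h2.eventually (lt_mem_nhds hα)).exists
  obtain ⟨n, hn⟩ := this
  exact ⟨n, hn.le⟩

private lemma margF_exists_lo (t : unitInterval) {α : ℝ} (hα : 0 < α) :
    ∃ y : ℝ, margF P t y < α := by
  have hanti : Antitone fun n : ℕ => {x : FSp | x t ≤ -(n : ℝ)} := by
    intro m n hmn x hx
    simp only [mem_setOf_eq] at hx ⊢
    have : (m : ℝ) ≤ (n : ℝ) := by exact_mod_cast hmn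
    linarith
  have hI : (⋂ n : ℕ, {x : FSp | x t ≤ -(n : ℝ)}) = ∅ := by
    ext x
    simp only [mem_iInter, mem_setOf_eq, mem_empty_iff_false, iff_false, not_forall, not_le]
    obtain ⟨n, hn⟩ := exists_nat_gt (-(x t))
    exact ⟨n, by linarith⟩
  have h1 : Tendsto (fun n : ℕ => P {x : FSp | x t ≤ -(n : ℝ)}) atTop (nhds 0) := by
    have := tendsto_measure_iInter_atTop (μ := P)
      (s := fun n : ℕ => {x : FSp | x t ≤ -(n : ℝ)})
      (fun n => ((meas_eval t) measurableSet_Iic).nullMeasurableSet) hanti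
      ⟨0, measure_ne_top P _⟩
    rwa [hI, measure_empty] at this
  have h2 : Tendsto (fun n : ℕ => margF P t (-(n : ℝ))) atTop (nhds 0) := by
    have := (ENNReal.tendsto_toReal ENNReal.zero_ne_top).comp h1
    simpa [Function.comp_def, margF, ENNReal.toReal_zero] using this
  obtain ⟨n, hn⟩ := (h2.eventually (gt_mem_nhds hα)).exists
  exact ⟨-(n : ℝ), hn⟩

private lemma margF_quant (t : unitInterval) (hF : Continuous (margF P t)) {α : ℝ}
    (h0 : 0 < α) (h1 : α < 1) : margF P t (quant P α t) = α := by
  show margF P t (sInf {y : ℝ | α ≤ margF P t y}) = α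
  set S : Set ℝ := {y : ℝ | α ≤ margF P t y} with hS
  obtain ⟨yhi, hyhi⟩ := margF_exists_hi P t h1
  obtain ⟨ylo, hylo⟩ := margF_exists_lo P t h0
  have hne : S.Nonempty := ⟨yhi, hyhi⟩
  have hbdd : BddBelow S := by
    refine ⟨ylo, fun y hy => ?_⟩
    by_contra h
    push_neg at h
    exact absurd (le_trans hy (margF_mono P t h.le)) (not_le.2 hylo)
  have hclosed : IsClosed S := isClosed_le continuous_const hF
  have hmem : sInf S ∈ S := hclosed.csInf_mem hne hbdd
  refine le_antisymm ?_ hmem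
  by_contra h
  push_neg at h
  have hopen : IsOpen {y : ℝ | α < margF P t y} := isOpen_lt continuous_const hF
  obtain ⟨ε, hε, hball⟩ := Metric.isOpen_iff.1 hopen _ h
  have hmem2 : sInf S - ε / 2 ∈ S := by
    have hball2 : sInf S - ε / 2 ∈ Metric.ball (sInf S) ε := by
      simp only [Metric.mem_ball, Real.dist_eq]
      have harith : sInf S - ε / 2 - sInf S = -(ε / 2) := by ring
      rw [harith, abs_neg, abs_of_nonneg (by linarith : (0:ℝ) ≤ ε / 2)]
      linarith
    have hlt2 := hball hball2
    simp only [mem_setOf_eq] at hlt2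
    exact le_of_lt hlt2
  have hle := csInf_le hbdd hmem2
  linarith

private lemma pdepth_le_low (t : unitInterval) (hF : Continuous (margF P t)) {α : ℝ}
    (hα0 : 0 < α) (hα : α < 1 / 2) {g : unitInterval → ℝ} (hg : g t ≤ quant P α t) :
    pdepth P g t ≤ 2 * α := by
  have hq := margF_quant P t hF hα0 (by linarith)
  have hFg : margF P t (g t) ≤ α := hq ▸ margF_mono P t hg
  have hsub : {x : FSp | x t < g t} ⊆ {x : FSp | x t ≤ g t} := by
    intro x hx
    simp only [mem_setOf_eq] at hx ⊢
    exact le_of_lt hx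
  have hlt : (P {x : FSp | x t < g t}).toReal ≤ α :=
    le_trans (ENNReal.toReal_mono (measure_ne_top P _) (measure_mono hsub)) hFg
  have hgt : 1 - α ≤ (P {x : FSp | g t < x t}).toReal := by
    rw [prob_gt]; linarith
  have h0 : (0:ℝ) ≤ (P {x : FSp | x t < g t}).toReal := ENNReal.toReal_nonneg
  unfold pdepth
  rw [abs_of_nonneg (by linarith)]
  linarith

private lemma pdepth_le_high (t : unitInterval) (hF : Continuous (margF P t)) {α : ℝ}
    (hα0 : 0 < α) (hα : α < 1 / 2) {g : unitInterval → ℝ}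
    (hg : quant P (1 - α) t ≤ g t) : pdepth P g t ≤ 2 * α := by
  have hq := margF_quant P t hF (show (0:ℝ) < 1 - α by linarith)
    (show (1:ℝ) - α < 1 by linarith)
  have hFg : 1 - α ≤ margF P t (g t) := hq ▸ margF_mono P t hg
  have hlt : 1 - α ≤ (P {x : FSp | x t < g t}).toReal := by
    rw [prob_lt P t hF]; linarith
  have hgt : (P {x : FSp | g t < x t}).toReal ≤ α := by
    rw [prob_gt]; linarith
  have h0 : (0:ℝ) ≤ (P {x : FSp | g t < x t}).toReal := ENNReal.toReal_nonneg
  unfold pdepth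
  rw [abs_of_nonpos (by linarith)]
  linarith

private lemma dcdf_mono (g : unitInterval → ℝ) : Monotone (dcdf P g) := by
  intro r s hrs
  apply ENNReal.toReal_mono (measure_ne_top volume _)
  apply measure_mono
  intro t ht
  simp only [mem_setOf_eq] at ht ⊢
  linarith

private lemma dcdf_nonneg (g : unitInterval → ℝ) (r : ℝ) : 0 ≤ dcdf P g r :=
  ENNReal.toReal_nonneg

private lemma dcdf_eq_zero {g : unitInterval → ℝ} {c r : ℝ}
    (hg : ∀ t, c < pdepth P g t) (hrc : r ≤ c) : dcdf P g r = 0 := by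
  have hempty : {t : unitInterval | pdepth P g t ≤ r} = ∅ := by
    ext t
    simp only [mem_setOf_eq, mem_empty_iff_false, iff_false, not_le]
    exact lt_of_le_of_lt hrc (hg t)
  simp [dcdf, hempty]

private lemma dcdf_lower (g : unitInterval → ℝ) {r : ℝ} (a b : unitInterval) (hab : a < b)
    (h : ∀ t ∈ Ioo a b, pdepth P g t ≤ r) : (b : ℝ) - (a : ℝ) ≤ dcdf P g r := by
  have hsub : Ioo a b ⊆ {t : unitInterval | pdepth P g t ≤ r} := h
  have hab' : (a : ℝ) < (b : ℝ) := hab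
  have h1 : ENNReal.ofReal ((b : ℝ) - (a : ℝ)) ≤ volume (Ioo a b : Set unitInterval) := by
    calc ENNReal.ofReal ((b : ℝ) - (a : ℝ)) = volume (Ioo (a : ℝ) (b : ℝ)) :=
          (Real.volume_Ioo).symm
      _ ≤ volume (Subtype.val '' (Ioo a b : Set unitInterval)) := by
          apply measure_mono
          rintro y ⟨hy1, hy2⟩
          exact ⟨⟨y, le_trans a.2.1 hy1.le, le_trans hy2.le b.2.2⟩,
            ⟨Subtype.mk_lt_mk.2 hy1, Subtype.mk_lt_mk.2 hy2⟩, rfl⟩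
      _ ≤ volume (Ioo a b : Set unitInterval) := by
          rw [unitInterval.volume_def]
          exact Measure.measure_subtype_coe_le_comap nullMeasurableSet_Icc _
  calc (b : ℝ) - (a : ℝ) = (ENNReal.ofReal ((b : ℝ) - (a : ℝ))).toReal := by
        rw [ENNReal.toReal_ofReal (by linarith)]
    _ ≤ (volume (Ioo a b : Set unitInterval)).toReal :=
        ENNReal.toReal_mono (measure_ne_top volume _) h1
    _ ≤ dcdf P g r := ENNReal.toReal_mono (measure_ne_top volume _) (measure_mono hsub)

private lemma prec_of {g x : unitInterval → ℝ} {c r1 : ℝ} (hr10 : 0 ≤ r1) (hr11 : r1 < 1)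
    (hr1c : r1 < c) (hgpos : 0 < dcdf P g r1) (hx : ∀ t, c < pdepth P x t) :
    prec P g x := by
  set c' : ℝ := min c 1 with hc'
  have hr1c' : r1 < c' := lt_min hr1c hr11
  have hc'c : c' ≤ c := min_le_left _ _
  have hc'1 : c' ≤ 1 := min_le_right _ _
  set T : Set ℝ := {r ∈ Icc (0:ℝ) 1 | 0 < dcdf P g r} with hT
  have hT1 : r1 ∈ T := ⟨⟨hr10, hr11.le⟩, hgpos⟩
  have hTne : T.Nonempty := ⟨r1, hT1⟩
  have hTbdd : BddBelow T := ⟨0, fun r hr => hr.1.1⟩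
  set r0 : ℝ := sInf T with hr0
  have hr0le : r0 ≤ r1 := csInf_le hTbdd hT1
  have hr0nonneg : 0 ≤ r0 := le_csInf hTne fun r hr => hr.1.1
  have hr0c' : r0 < c' := lt_of_le_of_lt hr0le hr1c'
  -- Claim A
  have claimA : ∀ r : ℝ, r0 < r → r ≤ c' → dcdf P x r < dcdf P g r ∧ r ∈ Rset P g x := by
    intro r hr0r hrc'
    have hx0 : dcdf P x r = 0 := dcdf_eq_zero P hx (le_trans hrc' hc'c)
    obtain ⟨r', hr'T, hr'lt⟩ := exists_lt_of_csInf_lt hTne hr0r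
    have hgr : 0 < dcdf P g r := lt_of_lt_of_le hr'T.2 (dcdf_mono P g hr'lt.le)
    refine ⟨by rw [hx0]; exact hgr, ⟨⟨le_trans hr0nonneg hr0r.le, le_trans hrc' hc'1⟩, ?_⟩⟩
    rw [hx0]; exact ne_of_gt hgr
  -- Claim B
  have claimB : ∀ r ∈ Rset P g x, r0 ≤ r := by
    intro r hr
    by_contra h
    push_neg at h
    have hx0 : dcdf P x r = 0 := dcdf_eq_zero P hx (by linarith)
    have hgr : 0 < dcdf P g r :=
      lt_of_le_of_ne (dcdf_nonneg P g r) (fun heq => hr.2 (by rw [← heq, hx0]))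
    exact absurd (csInf_le hTbdd ⟨hr.1, hgr⟩) (not_le.2 h)
  have hRne : (Rset P g x).Nonempty :=
    ⟨(r0 + c') / 2, (claimA _ (by linarith) (by linarith)).2⟩
  have hRbdd : BddBelow (Rset P g x) := ⟨r0, claimB⟩
  have hInfge : r0 ≤ sInf (Rset P g x) := le_csInf hRne claimB
  have hInfle : sInf (Rset P g x) ≤ r0 := by
    by_contra h
    push_neg at h
    set m : ℝ := min (sInf (Rset P g x)) c' with hm
    have hr0m : r0 < m := lt_min h hr0c'
    have hmem : (r0 + m) / 2 ∈ Rset P g x :=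
      (claimA _ (by linarith) (by
        have : m ≤ c' := min_le_right _ _
        linarith)).2
    have h1 : sInf (Rset P g x) ≤ (r0 + m) / 2 := csInf_le hRbdd hmem
    have h2 : m ≤ sInf (Rset P g x) := min_le_left _ _
    linarith
  have hInf : sInf (Rset P g x) = r0 := le_antisymm hInfle hInfge
  refine ⟨hRne, c' - r0, by linarith, fun r hr => ?_⟩
  rw [hInf] at hr
  obtain ⟨⟨hr1', hr2'⟩, _⟩ := hr
  exact (claimA r hr1' (by linarith)).1

end AuxLemmas

/-- **Null-at-the-boundary property of extremal depth.** -/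
theorem null_at_boundary (P : Measure FSp) [IsProbabilityMeasure P]
    (hFcont : ∀ t : unitInterval, Continuous (margF P t))
    (hAmeas : ∀ c : ℝ, 0 < c →
      MeasurableSet {x : FSp | ∀ t, c < pdepth P (⇑x) t})
    (hAfull : Tendsto (fun c : ℝ => (P {x : FSp | ∀ t, c < pdepth P (⇑x) t}).toReal)
      (nhdsWithin 0 (Ioi 0)) (nhds 1))
    (a b : unitInterval) (hab : a < b)
    (αs : ℕ → ℝ) (hαs : StrictAnti αs) (hαrange : ∀ n, αs n ∈ Ioo (0:ℝ) (1/2))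
    (hα0 : Tendsto αs atTop (nhds 0))
    (f : ℕ → unitInterval → ℝ) (hfmeas : ∀ n, Measurable (f n))
    (hout : ∀ n, (∀ t ∈ Ioo a b, f n t ≤ quant P (αs n) t) ∨
                 (∀ t ∈ Ioo a b, quant P (1 - αs n) t ≤ f n t)) :
    Tendsto (fun n => ed P (f n)) atTop (nhds 0) := by
  have hba : (0:ℝ) < (b:ℝ) - (a:ℝ) := by
    have hab' : (a:ℝ) < (b:ℝ) := hab
    linarith
  rw [Metric.tendsto_atTop]
  intro ε hε
  have h1 : ∀ᶠ c in nhdsWithin (0:ℝ) (Ioi 0),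
      1 - ε < (P {x : FSp | ∀ t, c < pdepth P (⇑x) t}).toReal :=
    hAfull.eventually (lt_mem_nhds (by linarith))
  have h2 : ∀ᶠ c in nhdsWithin (0:ℝ) (Ioi 0), c ∈ Ioi (0:ℝ) := self_mem_nhdsWithin
  obtain ⟨c, hcP, hcpos⟩ := (h1.and h2).exists
  have hcpos' : (0:ℝ) < c := hcpos
  have hev : ∀ᶠ n in atTop, αs n < c / 2 := hα0.eventually (Iio_mem_nhds (by positivity))
  obtain ⟨N, hN⟩ := eventually_atTop.1 hev
  refine ⟨N, fun n hn => ?_⟩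
  have hαn := hαrange n
  have hαc : 2 * αs n < c := by have := hN n hn; linarith
  have hd : ∀ t ∈ Ioo a b, pdepth P (f n) t ≤ 2 * αs n := by
    rcases hout n with h | h
    · exact fun t ht => pdepth_le_low P t (hFcont t) hαn.1 hαn.2 (h t ht)
    · exact fun t ht => pdepth_le_high P t (hFcont t) hαn.1 hαn.2 (h t ht)
  have hgpos : 0 < dcdf P (f n) (2 * αs n) :=
    lt_of_lt_of_le hba (dcdf_lower P (f n) a b hab hd)
  have hprec : ∀ x : FSp, (∀ t, c < pdepth P (⇑x) t) → prec P (f n) ⇑x := fun x hx =>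
    prec_of P (by linarith [hαn.1]) (by linarith [hαn.2]) hαc hgpos hx
  have hsub : {x : FSp | ¬ prec P (f n) ⇑x} ⊆ {x : FSp | ∀ t, c < pdepth P (⇑x) t}ᶜ :=
    fun x hx hmem => hx (hprec x hmem)
  have hA := hAmeas c hcpos'
  have h3 : P {x : FSp | ¬ prec P (f n) ⇑x}
      ≤ P ({x : FSp | ∀ t, c < pdepth P (⇑x) t}ᶜ) := measure_mono hsub
  have h4 : (P ({x : FSp | ∀ t, c < pdepth P (⇑x) t}ᶜ)).toReal
      = 1 - (P {x : FSp | ∀ t, c < pdepth P (⇑x) t}).toReal := by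
    rw [measure_compl hA (measure_ne_top P _), measure_univ,
      ENNReal.toReal_sub_of_le prob_le_one ENNReal.one_ne_top, ENNReal.toReal_one]
  have hed : ed P (f n) ≤ 1 - (P {x : FSp | ∀ t, c < pdepth P (⇑x) t}).toReal := by
    calc ed P (f n) ≤ (P ({x : FSp | ∀ t, c < pdepth P (⇑x) t}ᶜ)).toReal :=
          ENNReal.toReal_mono (measure_ne_top P _) h3
      _ = _ := h4
  have hed0 : 0 ≤ ed P (f n) := ENNReal.toReal_nonneg
  rw [Real.dist_eq, sub_zero, abs_of_nonneg hed0]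
  linarith
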